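/- Let Z be a {0,1}-valued random variable and suppose the family consisting of the {0,1}-valued potential mediators (M_{d,z})_{d,z∈{0,1}} and the integrable potential outcomes Y_{0,0}, Y_{0,1} is independent of Z. Assume P(M_{1,z} ≥ M_{0,z}) = 1 for z = 0,1 (weak monotonicity of the mediator in the treatment), P(M_{0,1} ≥ M_{0,0}) = 1 (weak monotonicity of the mediator in the instrument under the control state), and P(M_{0,1} > M_{0,0}) > 0. Then the IV estimand of the natural indirect effect satisfies ( E[Y_{0,M_{0,1}} − Y_{0,M_{0,0}}] / E[M_{0,1} − M_{0,0}] ) · E[M_{1,Z} − M_{0,Z}] = E[Y_{0,1} − Y_{0,0} | M_{0,1} > M_{0,0}] · Σ_{z∈{0,1}} P(M_{1,z} > M_{0,z})·P(Z=z); that is, NIE_0^{IV} equals the average mediator effect among instrument-compliers in the untreated state, times a positive weight, and in general differs from NIE_0 = Σ_z E[Y_{0,1} − Y_{0,0} | M_{1,z} > M_{0,z}]·P(M_{1,z} > M_{0,z})·P(Z=z). -/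

import Mathlib

open MeasureTheory ProbabilityTheory

/-- Conditional mean `E[W | A] = E[W·1_A] / P(A)` (set integral divided by probability). -/
noncomputable def condMean {Ω : Type*} [MeasurableSpace Ω] (P : Measure Ω)
    (W : Ω → ℝ) (A : Set Ω) : ℝ :=
  (∫ ω in A, W ω ∂P) / (P A).toReal

/-- A `{0,1}`-valued (Bool-coded) random variable, viewed as a real number. -/
noncomputable def bR (b : Bool) : ℝ := if b then 1 else 0

lemma lt_set_eq {Ω : Type*} (A B : Ω → Bool) :
    {ω | A ω < B ω} = A ⁻¹' {false} ∩ B ⁻¹' {true} := by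
  ext ω; cases hA : A ω <;> cases hB : B ω <;> simp [hA, hB]

lemma mset_lt {Ω : Type*} [MeasurableSpace Ω] {A B : Ω → Bool}
    (hA : Measurable A) (hB : Measurable B) : MeasurableSet {ω | A ω < B ω} := by
  rw [lt_set_eq]
  exact (hA (measurableSet_singleton _)).inter (hB (measurableSet_singleton _))

lemma ae_of_prob_one {Ω : Type*} [MeasurableSpace Ω] (P : Measure Ω) [IsProbabilityMeasure P]
    {s : Set Ω} (hs : MeasurableSet s) (h : P s = 1) : ∀ᵐ ω ∂P, ω ∈ s := by
  rw [ae_iff]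
  have := prob_compl_eq_zero_iff hs |>.mpr h
  exact this

lemma intble_bR {Ω : Type*} [MeasurableSpace Ω] (P : Measure Ω) [IsProbabilityMeasure P]
    {A : Ω → Bool} (hA : Measurable A) : Integrable (fun ω => bR (A ω)) P := by
  have h : (fun ω => bR (A ω)) = Set.indicator (A ⁻¹' {true}) (fun _ => (1:ℝ)) := by
    funext ω; cases hω : A ω <;> simp [bR, hω, Set.indicator]
  rw [h]
  exact (integrable_const (1:ℝ)).indicator (hA (measurableSet_singleton _))

lemma int_bR_sub {Ω : Type*} [MeasurableSpace Ω] (P : Measure Ω) [IsProbabilityMeasure P]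
    {A B : Ω → Bool} (hA : Measurable A) (hB : Measurable B)
    (h : P {ω | A ω ≤ B ω} = 1) :
    ∫ ω, (bR (B ω) - bR (A ω)) ∂P = (P {ω | A ω < B ω}).toReal := by
  have hle : ∀ᵐ ω ∂P, A ω ≤ B ω := by
    apply ae_of_prob_one P _ h
    have : {ω | A ω ≤ B ω} = (A ⁻¹' {false}) ∪ (B ⁻¹' {true}) := by
      ext ω; cases hA' : A ω <;> cases hB' : B ω <;> simp [hA', hB']
    rw [this]
    exact (hA (measurableSet_singleton _)).union (hB (measurableSet_singleton _))
  have heq : ∫ ω, (bR (B ω) - bR (A ω)) ∂P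
      = ∫ ω, Set.indicator {ω | A ω < B ω} (fun _ => (1:ℝ)) ω ∂P := by
    apply integral_congr_ae
    filter_upwards [hle] with ω hω
    cases hA' : A ω <;> cases hB' : B ω <;>
      first
      | (rw [hA', hB'] at hω; exact absurd hω (by decide))
      | simp_all [bR, Set.indicator, Set.mem_setOf_eq, hA', hB']
  rw [heq, integral_indicator (mset_lt hA hB)]
  simp
  rfl

lemma int_indic_eq {Ω : Type*} [MeasurableSpace Ω] (P : Measure Ω) [IsProbabilityMeasure P]
    {Z : Ω → Bool} (hZ : Measurable Z) (z : Bool) :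
    ∫ ω, (if Z ω = z then (1:ℝ) else 0) ∂P = (P {ω | Z ω = z}).toReal := by
  have h1 : (fun ω => (if Z ω = z then (1:ℝ) else 0))
      = Set.indicator {ω | Z ω = z} (fun _ => (1:ℝ)) := by
    funext ω; by_cases h : Z ω = z <;> simp [h, Set.indicator]
  have hm : MeasurableSet {ω | Z ω = z} := hZ (measurableSet_singleton z)
  rw [h1, integral_indicator hm]
  simp
  rfl

theorem stmt_18 {Ω : Type*} [MeasurableSpace Ω] (P : Measure Ω) [IsProbabilityMeasure P]
    (Z : Ω → Bool) (M : Bool → Bool → Ω → Bool) (Y0 : Bool → Ω → ℝ)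
    (hZ : Measurable Z) (hM : ∀ d z, Measurable (M d z))
    (hY : ∀ m, Integrable (Y0 m) P)
    (hIndep : Indep
      ((⨆ (d : Bool) (z : Bool), MeasurableSpace.comap (M d z) inferInstance)
        ⊔ (⨆ (m : Bool), MeasurableSpace.comap (Y0 m) inferInstance))
      (MeasurableSpace.comap Z inferInstance) P)
    (hmonoD : ∀ z : Bool, P {ω | M false z ω ≤ M true z ω} = 1)
    (hmonoZ : P {ω | M false false ω ≤ M false true ω} = 1)
    (hcompl : 0 < (P {ω | M false false ω < M false true ω}).toReal) :
    ((∫ ω, (Y0 (M false true ω) ω - Y0 (M false false ω) ω) ∂P)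
        / (∫ ω, (bR (M false true ω) - bR (M false false ω)) ∂P))
      * (∫ ω, (bR (M true (Z ω) ω) - bR (M false (Z ω) ω)) ∂P)
      = condMean P (fun ω => Y0 true ω - Y0 false ω) {ω | M false false ω < M false true ω}
        * ∑ z : Bool,
            (P {ω | M false z ω < M true z ω}).toReal * (P {ω | Z ω = z}).toReal := by
  have mS : MeasurableSet {ω | M false false ω < M false true ω} :=
    mset_lt (hM false false) (hM false true)
  have hleZ : ∀ᵐ ω ∂P, M false false ω ≤ M false true ω := by
    apply ae_of_prob_one P _ hmonoZ
    have : {ω | M false false ω ≤ M false true ω}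
        = (M false false ⁻¹' {false}) ∪ (M false true ⁻¹' {true}) := by
      ext ω; cases h1 : M false false ω <;> cases h2 : M false true ω <;> simp [h1, h2]
    rw [this]
    exact ((hM false false) (measurableSet_singleton _)).union
      ((hM false true) (measurableSet_singleton _))
  -- Step A: numerator
  have hA : ∫ ω, (Y0 (M false true ω) ω - Y0 (M false false ω) ω) ∂P
      = ∫ ω in {ω | M false false ω < M false true ω}, (Y0 true ω - Y0 false ω) ∂P := by
    rw [← integral_indicator mS]
    apply integral_congr_ae
    filter_upwards [hleZ] with ω hω
    by_cases hmem : ω ∈ {ω | M false false ω < M false true ω}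
    · have h1 : M false false ω = false := (Bool.lt_iff.mp hmem).1
      have h2 : M false true ω = true := (Bool.lt_iff.mp hmem).2
      simp [Set.indicator_of_mem hmem, h1, h2]
    · have heq : M false false ω = M false true ω :=
        le_antisymm hω (not_lt.mp hmem)
      rw [Set.indicator_of_notMem hmem, heq]
      ring
  -- Step B: denominator
  have hB : ∫ ω, (bR (M false true ω) - bR (M false false ω)) ∂P
      = (P {ω | M false false ω < M false true ω}).toReal :=
    int_bR_sub P (hM false false) (hM false true) hmonoZ
  -- Step C: last factor
  have hC : ∫ ω, (bR (M true (Z ω) ω) - bR (M false (Z ω) ω)) ∂P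
      = ∑ z : Bool, (P {ω | M false z ω < M true z ω}).toReal * (P {ω | Z ω = z}).toReal := by
    have hdecomp : (fun ω => bR (M true (Z ω) ω) - bR (M false (Z ω) ω))
        = fun ω => ∑ z : Bool, (bR (M true z ω) - bR (M false z ω))
            * (if Z ω = z then (1:ℝ) else 0) := by
      funext ω
      cases hzω : Z ω <;> simp [hzω]
    rw [hdecomp]
    have hintg : ∀ z : Bool, Integrable (fun ω => bR (M true z ω) - bR (M false z ω)) P :=
      fun z => (intble_bR P (hM true z)).sub (intble_bR P (hM false z))
    have hintind : ∀ z : Bool, Integrable (fun ω => (if Z ω = z then (1:ℝ) else 0)) P := by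
      intro z
      have h1 : (fun ω => (if Z ω = z then (1:ℝ) else 0))
          = Set.indicator {ω | Z ω = z} (fun _ => (1:ℝ)) := by
        funext ω; by_cases h : Z ω = z <;> simp [h, Set.indicator]
      rw [h1]
      exact (integrable_const (1:ℝ)).indicator (hZ (measurableSet_singleton _))
    have hint : ∀ z : Bool, Integrable
        (fun ω => (bR (M true z ω) - bR (M false z ω)) * (if Z ω = z then (1:ℝ) else 0)) P := by
      intro z
      apply Integrable.bdd_mul (c := 1) (hintind z) (hintg z).aestronglyMeasurable
      filter_upwards with ω
      cases h1 : M true z ω <;> cases h2 : M false z ω <;> simp [bR, h1, h2]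
    rw [integral_finset_sum _ (fun z _ => hint z)]
    apply Finset.sum_congr rfl
    intro z _
    have hMm1 : ∀ d, Measurable[((⨆ (d : Bool) (z : Bool),
          MeasurableSpace.comap (M d z) inferInstance)
        ⊔ (⨆ (m : Bool), MeasurableSpace.comap (Y0 m) inferInstance))] (M d z) := by
      intro d
      rw [measurable_iff_comap_le]
      refine le_trans ?_ le_sup_left
      refine le_trans ?_
        (le_iSup (fun d => ⨆ z, MeasurableSpace.comap (M d z) inferInstance) d)
      exact le_iSup (fun z => MeasurableSpace.comap (M d z) inferInstance) z
    have hbRmeas : Measurable bR := measurable_of_countable _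
    have hgz : Measurable[((⨆ (d : Bool) (z : Bool),
          MeasurableSpace.comap (M d z) inferInstance)
        ⊔ (⨆ (m : Bool), MeasurableSpace.comap (Y0 m) inferInstance))]
        (fun ω => bR (M true z ω) - bR (M false z ω)) :=
      ((hbRmeas.comp (hMm1 true)).sub (hbRmeas.comp (hMm1 false)))
    have hIndepFunZ : IndepFun (fun ω => bR (M true z ω) - bR (M false z ω)) Z P := by
      rw [IndepFun_iff_Indep]
      exact indep_of_indep_of_le_left hIndep (measurable_iff_comap_le.mp hgz)
    have hφ : Measurable (fun b : Bool => if b = z then (1:ℝ) else 0) :=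
      measurable_of_countable _
    have hIndepFun : IndepFun (fun ω => bR (M true z ω) - bR (M false z ω))
        (fun ω => if Z ω = z then (1:ℝ) else 0) P := by
      have := hIndepFunZ.comp measurable_id hφ
      exact this
    calc ∫ a, (bR (M true z a) - bR (M false z a)) * (if Z a = z then (1:ℝ) else 0) ∂P
        = (∫ ω, (bR (M true z ω) - bR (M false z ω)) ∂P)
            * ∫ ω, (if Z ω = z then (1:ℝ) else 0) ∂P :=
          IndepFun.integral_fun_mul_eq_mul_integral hIndepFun (hintg z).aestronglyMeasurable
            (hintind z).aestronglyMeasurable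
      _ = (P {ω | M false z ω < M true z ω}).toReal * (P {ω | Z ω = z}).toReal := by
          rw [int_bR_sub P (hM false z) (hM true z) (hmonoD z), int_indic_eq P hZ z]
  rw [hA, hB, hC, condMean]
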